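/- Let $\mathcal{L}$ be a self-adjoint operator on a Hilbert space $\mathcal{H}$, $f \in \mathcal{H}$, and let $\mu_f$ be the scalar spectral measure of $f$. Let $a_1, \dots, a_m$ be distinct points in the open upper half-plane with residues $\alpha_j$ solving the Vandermonde system, and let $K_\epsilon(x) = \epsilon^{-1}K(x/\epsilon)$ where $K(x) = \frac{1}{2\pi i}\sum_j (\alpha_j/(x-a_j) - \overline{\alpha_j}/(x-\overline{a_j}))$. Then for all $x \in \mathbb{R}$ and $\epsilon > 0$: $[K_\epsilon * \mu_f](x) = -\frac{1}{\pi}\sum_{j=1}^m \mathrm{Im}\left( \alpha_j \langle (\mathcal{L} - (x - \epsilon a_j))^{-1} f, f \rangle \right)$. -/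

import Mathlib

open MeasureTheory Complex

local notation "⟪" x ", " y "⟫" => @inner ℂ _ _ x y

/-- The (real part of the) rational kernel
`K(x) = (2πi)⁻¹ ∑ⱼ (αⱼ/(x - aⱼ) - conj αⱼ/(x - conj aⱼ))`. -/
noncomputable def ratKernel (m : ℕ) (a α : Fin m → ℂ) (x : ℝ) : ℝ :=
  ((2 * (Real.pi : ℂ) * Complex.I)⁻¹ *
    ∑ j, (α j / ((x : ℂ) - a j) -
      (starRingEnd ℂ) (α j) / ((x : ℂ) - (starRingEnd ℂ) (a j)))).re

/-- **Generalized Stone formula.** If `μ` is the scalar spectral measure of `f` for a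
self-adjoint operator `𝓛` (encoded via the resolvent identity
`⟪(𝓛 - z)⁻¹ f, f⟫ = ∫ (λ - z)⁻¹ dμ(λ)`), the `aⱼ` lie in the open upper half-plane and
the `αⱼ` solve the transposed Vandermonde system, then with `K_ε(x) = ε⁻¹ K(x/ε)`:
`[K_ε * μ](x) = -(1/π) ∑ⱼ Im (αⱼ ⟪(𝓛 - (x - ε aⱼ))⁻¹ f, f⟫)`. -/
theorem generalized_stone_formula
    {H : Type*} [NormedAddCommGroup H] [InnerProductSpace ℂ H]
    (μ : Measure ℝ) [IsFiniteMeasure μ] (f : H) (R : ℂ → (H →L[ℂ] H))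
    (hres : ∀ z : ℂ, z.im ≠ 0 → ⟪(R z) f, f⟫ = ∫ l : ℝ, ((l : ℂ) - z)⁻¹ ∂μ)
    (m : ℕ) (hm : 0 < m) (a α : Fin m → ℂ)
    (ha : ∀ j, 0 < (a j).im) (hinj : Function.Injective a)
    (hvand : ∀ k : ℕ, k < m → ∑ j, α j * a j ^ k = if k = 0 then 1 else 0)
    (x ε : ℝ) (hε : 0 < ε) :
    ∫ l : ℝ, ε⁻¹ * ratKernel m a α ((x - l) / ε) ∂μ
      = -(1 / Real.pi) *
          ∑ j, (α j * ⟪(R ((x : ℂ) - (ε : ℂ) * a j)) f, f⟫).im := by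
  have hπ : Real.pi ≠ 0 := Real.pi_ne_zero
  have hεne : ε ≠ 0 := hε.ne'
  have hεC : (ε : ℂ) ≠ 0 := by exact_mod_cast hεne
  set z : Fin m → ℂ := fun j => (x : ℂ) - (ε : ℂ) * a j with hzdef
  have hzim : ∀ j, (z j).im ≠ 0 := by
    intro j
    have : (z j).im = -(ε * (a j).im) := by
      simp [hzdef, Complex.sub_im, Complex.mul_im]
    rw [this]
    exact neg_ne_zero.mpr (ne_of_gt (mul_pos hε (ha j)))
  have hden : ∀ j (l : ℝ), ((l : ℂ) - z j) ≠ 0 := by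
    intro j l h
    apply hzim j
    have : (z j) = (l : ℂ) := (sub_eq_zero.mp h).symm
    rw [this]; simp
  have hint : ∀ j, Integrable (fun l : ℝ => ((l : ℂ) - z j)⁻¹) μ := by
    intro j
    have hcont : Continuous (fun l : ℝ => ((l : ℂ) - z j)⁻¹) :=
      Continuous.inv₀ (by continuity) (fun l => hden j l)
    refine ⟨hcont.aestronglyMeasurable, ?_⟩
    apply MeasureTheory.HasFiniteIntegral.of_bounded (C := |(z j).im|⁻¹)
    filter_upwards with l
    rw [norm_inv]
    have him : (0 : ℝ) < |(z j).im| := abs_pos.mpr (hzim j)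
    apply inv_anti₀ him
    calc |(z j).im| = |((l : ℂ) - z j).im| := by simp [Complex.sub_im, abs_sub_comm]
      _ ≤ ‖(l : ℂ) - z j‖ := Complex.abs_im_le_norm _
      _ = ‖(l : ℂ) - z j‖ := rfl
  -- pointwise identity
  have hpt : ∀ l : ℝ, ε⁻¹ * ratKernel m a α ((x - l) / ε)
      = ∑ j, Real.pi⁻¹ * (-(α j * ((l : ℂ) - z j)⁻¹)).im := by
    intro l
    unfold ratKernel
    set u : Fin m → ℂ := fun j => -(α j * ((l : ℂ) - z j)⁻¹) with hudef
    have hw : ∀ j, α j / ((((x - l) / ε : ℝ) : ℂ) - a j) = (ε : ℂ) * u j := by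
      intro j
      have h1 : ((((x - l) / ε : ℝ)) : ℂ) - a j = ((l : ℂ) - z j) * (-(ε : ℂ)⁻¹) := by
        rw [hzdef]; push_cast; field_simp; ring
      rw [h1, hudef, div_eq_mul_inv, mul_inv, inv_neg, inv_inv]
      ring
    have hterm : ∀ j, (α j / ((((x - l) / ε : ℝ) : ℂ) - a j) -
        (starRingEnd ℂ) (α j) / ((((x - l) / ε : ℝ) : ℂ) - (starRingEnd ℂ) (a j)))
        = ((2 * ((ε : ℂ) * u j).im : ℝ) : ℂ) * Complex.I := by
      intro j
      have hc : (starRingEnd ℂ) (α j) / ((((x - l) / ε : ℝ) : ℂ) - (starRingEnd ℂ) (a j))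
          = (starRingEnd ℂ) (α j / ((((x - l) / ε : ℝ) : ℂ) - a j)) := by
        simp [map_div₀, map_sub, Complex.conj_ofReal]
      rw [hc, ← Complex.sub_conj, hw]
    rw [Finset.sum_congr rfl (fun j _ => hterm j)]
    have hsum : (∑ j, ((2 * ((ε : ℂ) * u j).im : ℝ) : ℂ) * Complex.I)
        = (((∑ j, 2 * ((ε : ℂ) * u j).im) : ℝ) : ℂ) * Complex.I := by
      rw [← Finset.sum_mul]; push_cast; ring
    rw [hsum]
    have hkey : ((2 * (Real.pi : ℂ) * Complex.I)⁻¹ *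
        ((((∑ j, 2 * ((ε : ℂ) * u j).im) : ℝ) : ℂ) * Complex.I))
        = ((((∑ j, 2 * ((ε : ℂ) * u j).im) / (2 * Real.pi) : ℝ)) : ℂ) := by
      have hπC : ((Real.pi : ℂ)) ≠ 0 := by exact_mod_cast hπ
      push_cast
      field_simp
    rw [hkey, Complex.ofReal_re]
    have him : ∀ j, ((ε : ℂ) * u j).im = ε * (u j).im := by
      intro j; simp [Complex.mul_im]
    simp only [him]
    rw [Finset.sum_div, Finset.mul_sum]
    refine Finset.sum_congr rfl fun j _ => ?_
    field_simp
    rfl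
  -- main computation
  calc ∫ l : ℝ, ε⁻¹ * ratKernel m a α ((x - l) / ε) ∂μ
      = ∫ l : ℝ, ∑ j, Real.pi⁻¹ * (-(α j * ((l : ℂ) - z j)⁻¹)).im ∂μ := by
        exact integral_congr_ae (Filter.Eventually.of_forall hpt)
    _ = ∑ j, ∫ l : ℝ, Real.pi⁻¹ * (-(α j * ((l : ℂ) - z j)⁻¹)).im ∂μ := by
        refine integral_finset_sum _ fun j _ => ?_
        exact ((((hint j).const_mul (α j)).neg).im).const_mul _
    _ = ∑ j, Real.pi⁻¹ * (-(α j * ⟪(R (z j)) f, f⟫)).im := by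
        refine Finset.sum_congr rfl fun j _ => ?_
        rw [integral_const_mul]
        congr 1
        have hI : Integrable (fun l : ℝ => -(α j * ((l : ℂ) - z j)⁻¹)) μ :=
          (((hint j).const_mul (α j)).neg)
        have h3 : ∫ l : ℝ, (-(α j * ((l : ℂ) - z j)⁻¹)).im ∂μ
            = (∫ l : ℝ, -(α j * ((l : ℂ) - z j)⁻¹) ∂μ).im := integral_im hI
        rw [h3, integral_neg, integral_const_mul, hres (z j) (hzim j)]
    _ = -(1 / Real.pi) * ∑ j, (α j * ⟪(R ((x : ℂ) - (ε : ℂ) * a j)) f, f⟫).im := by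
        rw [Finset.mul_sum]
        refine Finset.sum_congr rfl fun j _ => ?_
        rw [hzdef]
        simp [Complex.neg_im]
        ring
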